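/- arXiv:1805.04638 — 8 statements merged into one kernel-verified Lean document; each statement's English description precedes it below -/
import Mathlib

section
/- Let a ≥ 2 and s, t ≥ 1 be integers. Then gcd(a^s + 1, a^t + 1) equals a^{gcd(s,t)} + 1 if both s/gcd(s,t) and t/gcd(s,t) are odd, and equals gcd(2, a + 1) otherwise. -/
/-- Natural-number Bézout: there are naturals `x, y` with `s*x = gcd s t + t*y`. -/
lemma nat_bezout_aux (s t : ℕ) (hs : 1 ≤ s) (ht : 1 ≤ t) :
    ∃ x y : ℕ, s * x = Nat.gcd s t + t * y := by
  have h := Nat.gcd_eq_gcd_ab s t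
  set A := Nat.gcdA s t with hA
  set B := Nat.gcdB s t with hB
  set k : ℤ := ((A.natAbs + B.natAbs : ℕ) : ℤ) with hk
  have hk' : k = |A| + |B| := by
    simp [hk, Int.natCast_natAbs]
  have hts : (1:ℤ) ≤ (t:ℤ) := by exact_mod_cast ht
  have hss : (1:ℤ) ≤ (s:ℤ) := by exact_mod_cast hs
  have hX : 0 ≤ A + k * t := by
    nlinarith [neg_abs_le A, abs_nonneg A, abs_nonneg B]
  have hY : 0 ≤ k * s - B := by
    nlinarith [le_abs_self B, abs_nonneg A, abs_nonneg B]
  refine ⟨(A + k * t).toNat, (k * s - B).toNat, ?_⟩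
  have key : ((s : ℤ)) * ((A + k * t).toNat : ℤ) =
      ((Nat.gcd s t : ℤ)) + (t : ℤ) * ((k * s - B).toNat : ℤ) := by
    rw [Int.toNat_of_nonneg hX, Int.toNat_of_nonneg hY]
    linear_combination -h
  exact_mod_cast key

theorem gcd_pow_add_one (a s t : ℕ) (ha : 2 ≤ a) (hs : 1 ≤ s) (ht : 1 ≤ t) :
    Nat.gcd (a ^ s + 1) (a ^ t + 1) =
      if Odd (s / Nat.gcd s t) ∧ Odd (t / Nat.gcd s t) then a ^ Nat.gcd s t + 1
      else Nat.gcd 2 (a + 1) := by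
  set d := Nat.gcd s t with hd
  have hds : d ∣ s := Nat.gcd_dvd_left s t
  have hdt : d ∣ t := Nat.gcd_dvd_right s t
  have hd0 : 0 < d := Nat.gcd_pos_of_pos_left t hs
  set g := Nat.gcd (a ^ s + 1) (a ^ t + 1) with hg
  have hg0 : 0 < g := Nat.gcd_pos_of_pos_left _ (by positivity)
  have hgs : (g:ℤ) ∣ (a:ℤ)^s + 1 := by exact_mod_cast Nat.gcd_dvd_left (a^s+1) (a^t+1)
  have hgt : (g:ℤ) ∣ (a:ℤ)^t + 1 := by exact_mod_cast Nat.gcd_dvd_right (a^s+1) (a^t+1)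
  have hms : (a:ℤ)^s ≡ -1 [ZMOD (g:ℤ)] := by
    rw [Int.modEq_iff_dvd]
    have : (-1:ℤ) - (a:ℤ)^s = -((a:ℤ)^s + 1) := by ring
    rw [this]; exact dvd_neg.mpr hgs
  have hmt : (a:ℤ)^t ≡ -1 [ZMOD (g:ℤ)] := by
    rw [Int.modEq_iff_dvd]
    have : (-1:ℤ) - (a:ℤ)^t = -((a:ℤ)^t + 1) := by ring
    rw [this]; exact dvd_neg.mpr hgt
  obtain ⟨x, y, hxy⟩ := nat_bezout_aux s t hs ht
  -- a^d ≡ (-1)^(x+y) mod g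
  have hmd : (a:ℤ)^d ≡ (-1)^(x+y) [ZMOD (g:ℤ)] := by
    have h2 : ((a:ℤ)^t)^y ≡ (-1)^y [ZMOD (g:ℤ)] := hmt.pow y
    have h3 : (a:ℤ)^d * ((a:ℤ)^t)^y ≡ (-1)^x [ZMOD (g:ℤ)] := by
      calc (a:ℤ)^d * ((a:ℤ)^t)^y = ((a:ℤ)^s)^x := by
            rw [← pow_mul, ← pow_add, ← hxy, pow_mul]
        _ ≡ (-1)^x [ZMOD (g:ℤ)] := hms.pow x
    have h5 : (a:ℤ)^d * (-1)^y ≡ (-1)^x [ZMOD (g:ℤ)] :=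
      ((h2.mul_left ((a:ℤ)^d)).symm.trans h3)
    have h6 := h5.mul_right ((-1:ℤ)^y)
    calc (a:ℤ)^d = (a:ℤ)^d * (-1)^y * (-1)^y := by
          rw [mul_assoc, ← pow_add, ← two_mul, pow_mul]; norm_num
      _ ≡ (-1)^x * (-1)^y [ZMOD (g:ℤ)] := h6
      _ = (-1)^(x+y) := (pow_add _ _ _).symm
  -- key fact
  have hkey : ∀ u : ℕ, d ∣ u → (a:ℤ)^u ≡ -1 [ZMOD (g:ℤ)] →
      ((-1:ℤ)^(x+y))^(u/d) = 1 → (g:ℤ) ∣ 2 := by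
    intro u hdu hmu h3
    have h1 : (a:ℤ)^u = ((a:ℤ)^d)^(u/d) := by rw [← pow_mul, Nat.mul_div_cancel' hdu]
    have h2 : (a:ℤ)^u ≡ ((-1:ℤ)^(x+y))^(u/d) [ZMOD (g:ℤ)] := by
      rw [h1]; exact hmd.pow _
    rw [h3] at h2
    have h4 : (1:ℤ) ≡ -1 [ZMOD (g:ℤ)] := h2.symm.trans hmu
    have h5 := Int.ModEq.dvd h4
    have : (-1:ℤ) - 1 = -2 := by ring
    rw [this] at h5
    exact dvd_neg.mp h5
  by_cases hodd : Odd (s / d) ∧ Odd (t / d)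
  · rw [if_pos hodd]
    have hds' : a^d + 1 ∣ a^s + 1 := by
      have h1 : a^s = (a^d)^(s/d) := by rw [← pow_mul, Nat.mul_div_cancel' hds]
      rw [h1]
      simpa using hodd.1.nat_add_dvd_pow_add_pow (a^d) 1
    have hdt' : a^d + 1 ∣ a^t + 1 := by
      have h1 : a^t = (a^d)^(t/d) := by rw [← pow_mul, Nat.mul_div_cancel' hdt]
      rw [h1]
      simpa using hodd.2.nat_add_dvd_pow_add_pow (a^d) 1
    have hdg : a^d + 1 ∣ g := Nat.dvd_gcd hds' hdt'
    rcases Nat.even_or_odd (x+y) with hxe | hxo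
    · exfalso
      have hb : ((-1:ℤ)^(x+y)) = 1 := hxe.neg_one_pow
      have h2 : (g:ℤ) ∣ 2 := hkey s hds hms (by rw [hb, one_pow])
      have h2' : g ∣ 2 := by exact_mod_cast h2
      have hle := Nat.le_of_dvd (by norm_num) h2'
      have hle2 : a^d + 1 ≤ g := Nat.le_of_dvd hg0 hdg
      have h3 : a ≤ a^d := Nat.le_self_pow (by omega) a
      omega
    · have hb : ((-1:ℤ)^(x+y)) = -1 := hxo.neg_one_pow
      rw [hb] at hmd
      have hgd : (g:ℤ) ∣ (a:ℤ)^d + 1 := by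
        have h5 := Int.ModEq.dvd hmd
        have : (-1:ℤ) - (a:ℤ)^d = -((a:ℤ)^d + 1) := by ring
        rw [this] at h5
        exact dvd_neg.mp h5
      have hgd' : g ∣ a^d + 1 := by exact_mod_cast hgd
      exact Nat.dvd_antisymm hgd' hdg
  · rw [if_neg hodd]
    have h2 : (g:ℤ) ∣ 2 := by
      rcases Nat.even_or_odd (s/d) with he | hos
      · exact hkey s hds hms (by rw [← pow_mul]; exact Even.neg_one_pow (he.mul_left _))
      · rcases Nat.even_or_odd (t/d) with he | hot
        · exact hkey t hdt hmt (by rw [← pow_mul]; exact Even.neg_one_pow (he.mul_left _))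
        · exact absurd ⟨hos, hot⟩ hodd
    have h2' : g ∣ 2 := by exact_mod_cast h2
    rcases Nat.even_or_odd a with hae | hao
    · -- a even
      obtain ⟨c, hc⟩ := hae
      have hda : 2 ∣ a := ⟨c, by omega⟩
      have hdas : 2 ∣ a^s := dvd_pow hda (by omega)
      obtain ⟨e, he⟩ := hdas
      have h1 : ¬ 2 ∣ (a^s+1) := by omega
      have hg2 : ¬ 2 ∣ g := fun h => h1 (h.trans (Nat.gcd_dvd_left _ _))
      have hga : Nat.gcd 2 (a+1) = 1 := by
        rcases (Nat.dvd_prime Nat.prime_two).mp (Nat.gcd_dvd_left 2 (a+1)) with h | h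
        · exact h
        · exfalso
          have := h ▸ Nat.gcd_dvd_right 2 (a+1)
          omega
      rw [hga]
      rcases (Nat.dvd_prime Nat.prime_two).mp h2' with h | h
      · exact h
      · exact absurd (h ▸ dvd_refl g) hg2
    · -- a odd
      obtain ⟨cs, hcs⟩ := hao.pow (n := s)
      obtain ⟨ct, hct⟩ := hao.pow (n := t)
      have hgs2 : 2 ∣ a^s + 1 := by omega
      have hgt2 : 2 ∣ a^t + 1 := by omega
      have h2g : 2 ∣ g := Nat.dvd_gcd hgs2 hgt2
      have hgeq : g = 2 := Nat.dvd_antisymm h2' h2g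
      obtain ⟨ca, hca⟩ := hao
      rw [hgeq, Nat.gcd_eq_left (by omega)]
end

section
/- Let a ≥ 2 and s, t ≥ 1 be integers. Then gcd(a^s − 1, a^t + 1) equals a^{gcd(s,t)} + 1 if s/gcd(s,t) is even and t/gcd(s,t) is odd, and equals gcd(2, a + 1) otherwise. -/
private lemma gcd_aux_pow_eq_one (a s t g : ℕ) (ha : 2 ≤ a)
    (hg : g = Nat.gcd (a ^ s - 1) (a ^ t + 1)) :
    (a : ZMod g) ^ s = 1 ∧ (a : ZMod g) ^ t = -1 := by
  have h1 : 1 ≤ a ^ s := Nat.one_le_pow _ _ (by omega)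
  have hd1 : g ∣ a ^ s - 1 := hg ▸ Nat.gcd_dvd_left _ _
  have hd2 : g ∣ a ^ t + 1 := hg ▸ Nat.gcd_dvd_right _ _
  have e1 : ((a ^ s - 1 : ℕ) : ZMod g) = 0 := (ZMod.natCast_eq_zero_iff _ _).2 hd1
  have e2 : ((a ^ t + 1 : ℕ) : ZMod g) = 0 := (ZMod.natCast_eq_zero_iff _ _).2 hd2
  rw [Nat.cast_sub h1] at e1
  push_cast at e1 e2
  constructor
  · linear_combination e1
  · linear_combination e2

/-- For integers `a ≥ 2`, `s, t ≥ 1`,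
`gcd(a^s - 1, a^t + 1) = a^{gcd(s,t)} + 1` if `s/gcd(s,t)` is even and `t/gcd(s,t)` is odd,
and `gcd(a^s - 1, a^t + 1) = gcd(2, a + 1)` otherwise. -/
theorem gcd_pow_sub_one_pow_add_one (a s t : ℕ) (ha : 2 ≤ a) (hs : 1 ≤ s) (ht : 1 ≤ t) :
    Nat.gcd (a ^ s - 1) (a ^ t + 1) =
      if Even (s / Nat.gcd s t) ∧ Odd (t / Nat.gcd s t) then a ^ Nat.gcd s t + 1
      else Nat.gcd 2 (a + 1) := by
  set d := Nat.gcd s t with hd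
  set g := Nat.gcd (a ^ s - 1) (a ^ t + 1) with hg
  have hdpos : 0 < d := Nat.gcd_pos_of_pos_left _ hs
  have hds : d ∣ s := Nat.gcd_dvd_left s t
  have hdt : d ∣ t := Nat.gcd_dvd_right s t
  have hcop : Nat.Coprime (s / d) (t / d) := Nat.coprime_div_gcd_div_gcd hdpos
  have hseq : d * (s / d) = s := Nat.mul_div_cancel' hds
  have hteq : d * (t / d) = t := Nat.mul_div_cancel' hdt
  obtain ⟨hx1, hx2⟩ := gcd_aux_pow_eq_one a s t g ha hg
  -- (a : ZMod g) ^ (2 * t) = 1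
  have hx2t : (a : ZMod g) ^ (2 * t) = 1 := by
    rw [mul_comm, pow_mul, hx2]; ring
  have hxg : (a : ZMod g) ^ Nat.gcd s (2 * t) = 1 := pow_gcd_eq_one.2 ⟨hx1, hx2t⟩
  have hgcd2 : Nat.gcd s (2 * t) ∣ 2 * d := by
    calc Nat.gcd s (2 * t) ∣ Nat.gcd (2 * s) (2 * t) :=
          Nat.dvd_gcd ((Nat.gcd_dvd_left _ _).trans (dvd_mul_left s 2)) (Nat.gcd_dvd_right _ _)
      _ = 2 * d := Nat.gcd_mul_left 2 s t
  have hdgcd : d ∣ Nat.gcd s (2 * t) := Nat.dvd_gcd hds (hdt.mul_left 2)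
  have hx2d : (a : ZMod g) ^ (2 * d) = 1 := by
    obtain ⟨c, hc⟩ := hgcd2
    rw [hc, pow_mul, hxg, one_pow]
  have h1le : ∀ n : ℕ, 1 ≤ a ^ n := fun n => Nat.one_le_pow _ _ (by omega)
  by_cases hE : Even (s / d)
  · -- main case: s/d even, hence t/d odd
    have hO : Odd (t / d) := by
      rcases Nat.even_or_odd (t / d) with h | h
      · exfalso
        obtain ⟨k, hk⟩ := hE
        obtain ⟨l, hl⟩ := h
        have : 2 ∣ Nat.gcd (s / d) (t / d) := Nat.dvd_gcd ⟨k, by omega⟩ ⟨l, by omega⟩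
        rw [hcop] at this; omega
      · exact h
    rw [if_pos ⟨hE, hO⟩]
    -- g ∣ a ^ d + 1 : show (a : ZMod g)^d = -1
    have hxd : (a : ZMod g) ^ d = -1 := by
      obtain ⟨l, hl⟩ := hO
      have : (a : ZMod g) ^ t = ((a : ZMod g) ^ (2 * d)) ^ l * (a : ZMod g) ^ d := by
        rw [← pow_mul, ← pow_add, ← hteq, hl]; ring_nf
      rw [hx2d, one_pow, one_mul] at this
      rw [← this, hx2]
    have hdvd1 : g ∣ a ^ d + 1 := by
      have : ((a ^ d + 1 : ℕ) : ZMod g) = 0 := by push_cast [hxd]; ring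
      exact (ZMod.natCast_eq_zero_iff _ _).1 this
    -- a ^ d + 1 ∣ g
    obtain ⟨k, hk⟩ := hE
    have h2ds : 2 * d ∣ s := ⟨k, by rw [← hseq, hk]; ring⟩
    have hdvd2 : a ^ d + 1 ∣ a ^ s - 1 := by
      obtain ⟨m, hm⟩ := h2ds
      have step1 : a ^ d + 1 ∣ a ^ (2 * d) - 1 := by
        have : a ^ (2 * d) - 1 = (a ^ d + 1) * (a ^ d - 1) := by
          have h2 : a ^ (2 * d) = (a ^ d) ^ 2 := by rw [← pow_mul, mul_comm]
          rw [h2, show (1:ℕ) = 1 ^ 2 by norm_num, Nat.sq_sub_sq, one_pow]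
        exact ⟨_, this⟩
      have step2 : a ^ (2 * d) - 1 ∣ a ^ s - 1 := by
        have := Nat.sub_dvd_pow_sub_pow (a ^ (2 * d)) 1 m
        simpa [← pow_mul, one_pow, ← hm] using this
      exact step1.trans step2
    have hdvd3 : a ^ d + 1 ∣ a ^ t + 1 := by
      have := Odd.nat_add_dvd_pow_add_pow (a ^ d) 1 hO
      simpa [← pow_mul, one_pow, hteq] using this
    exact Nat.dvd_antisymm hdvd1 (Nat.dvd_gcd hdvd2 hdvd3)
  · -- s/d odd
    have hcond : ¬ (Even (s / d) ∧ Odd (t / d)) := fun h => hE h.1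
    rw [if_neg hcond]
    -- gcd s (2t) = d
    have hOs : Odd (s / d) := Nat.odd_iff.2 (Nat.not_even_iff.1 hE)
    have hgd : Nat.gcd s (2 * t) = d := by
      obtain ⟨c, hc⟩ := hdgcd
      have hcpos : 0 < Nat.gcd s (2 * t) := Nat.gcd_pos_of_pos_left _ hs
      have hc2 : c ∣ 2 := by
        refine (mul_dvd_mul_iff_left (show (d:ℕ) ≠ 0 by omega)).1 ?_
        rw [← hc, mul_comm d 2]
        exact hgcd2
      have hcpos' : 0 < c := by
        rcases Nat.eq_zero_or_pos c with h | h
        · rw [h, mul_zero] at hc; omega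
        · exact h
      have hcle : c ≤ 2 := Nat.le_of_dvd (by norm_num) hc2
      interval_cases c
      · omega
      · exfalso
        have h2d : d * 2 ∣ s := hc ▸ Nat.gcd_dvd_left s (2 * t)
        obtain ⟨m, hm⟩ := h2d
        have hsd : s / d = 2 * m := by
          rw [hm, mul_assoc, Nat.mul_div_cancel_left _ hdpos]
        rw [hsd] at hOs
        exact (Nat.not_odd_iff_even.2 ⟨m, by ring⟩) hOs
    have hxd1 : (a : ZMod g) ^ d = 1 := hgd ▸ hxg
    have hxt1 : (a : ZMod g) ^ t = 1 := by
      rw [← hteq, pow_mul, hxd1, one_pow]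
    have h2zero : ((2 : ℕ) : ZMod g) = 0 := by
      rw [hxt1] at hx2
      push_cast
      linear_combination hx2
    have hg2 : g ∣ 2 := (ZMod.natCast_eq_zero_iff _ _).1 h2zero
    rcases Nat.even_or_odd a with haE | haO
    · -- a even : g odd, so g = 1, and gcd 2 (a+1) = 1
      obtain ⟨w, hw⟩ := haE
      have hodd : ¬ 2 ∣ a ^ s - 1 := by
        have hps : 2 ∣ a ^ s := dvd_pow (by omega) (by omega)
        have := h1le s
        omega
      have hg1 : g = 1 := by
        rcases (Nat.dvd_prime Nat.prime_two).1 hg2 with h | h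
        · exact h
        · exact absurd (h ▸ hg ▸ Nat.gcd_dvd_left (a ^ s - 1) (a ^ t + 1)) hodd
      have hga : Nat.gcd 2 (a + 1) = 1 := by
        have hdd := Nat.gcd_dvd_left 2 (a + 1)
        rcases (Nat.dvd_prime Nat.prime_two).1 hdd with h | h
        · exact h
        · exfalso
          have := h ▸ Nat.gcd_dvd_right 2 (a + 1)
          omega
      omega
    · -- a odd : g = 2 = gcd 2 (a+1)
      obtain ⟨w, hw⟩ := id haO
      have h2s : 2 ∣ a ^ s - 1 := by
        obtain ⟨m, hm⟩ := (haO.pow : Odd (a ^ s))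
        omega
      have h2t : 2 ∣ a ^ t + 1 := by
        obtain ⟨m, hm⟩ := (haO.pow : Odd (a ^ t))
        omega
      have h2g : 2 ∣ g := Nat.dvd_gcd h2s h2t
      have hg2' : g = 2 := Nat.dvd_antisymm hg2 h2g
      have hga : Nat.gcd 2 (a + 1) = 2 := Nat.gcd_eq_left (by omega)
      omega
end

section
/- Let a ≥ 2 be an integer and let l, n ≥ 1 be integers with gcd(l, n) = 1. Then (a^n − 1)/(a − 1) divides (a^{ln} − 1)/(a^l − 1); equivalently, (a^n − 1)·(a^l − 1) divides (a^{ln} − 1)·(a − 1). -/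
/-- For `a ≥ 2` and `l, n ≥ 1` with `gcd(l, n) = 1`,
`(a^n - 1)/(a - 1)` divides `(a^{ln} - 1)/(a^l - 1)`; equivalently,
`(a^n - 1)(a^l - 1)` divides `(a^{ln} - 1)(a - 1)`. -/
theorem quotient_divides_quotient (a l n : ℕ) (ha : 2 ≤ a) (hl : 1 ≤ l) (hn : 1 ≤ n)
    (hcop : Nat.gcd l n = 1) :
    (a ^ n - 1) / (a - 1) ∣ (a ^ (l * n) - 1) / (a ^ l - 1) ∧
      (a ^ n - 1) * (a ^ l - 1) ∣ (a ^ (l * n) - 1) * (a - 1) := by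
  set A := a ^ n - 1 with hA
  set B := a ^ l - 1 with hB
  set x := a ^ (l * n) - 1 with hx
  have hd1 : a - 1 ∣ A := by simpa using Nat.sub_dvd_pow_sub_pow a 1 n
  have hAx : A ∣ x := by
    rw [hx, mul_comm l n, pow_mul]
    simpa using Nat.sub_dvd_pow_sub_pow (a ^ n) 1 l
  have hBx : B ∣ x := by
    rw [hx, pow_mul]
    simpa using Nat.sub_dvd_pow_sub_pow (a ^ l) 1 n
  -- key: gcd A B ∣ a - 1
  have hgcd : Nat.gcd A B ∣ a - 1 := by
    set g := Nat.gcd A B with hg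
    have hga : Nat.Coprime g a := by
      have h1 : Nat.Coprime A a := by
        have : Nat.Coprime A (a ^ n) := by
          have h5 : Nat.gcd A (A + 1) = 1 := by
            rw [Nat.gcd_self_add_right, Nat.gcd_one_right]
          rwa [hA, Nat.sub_add_cancel (Nat.one_le_pow _ _ (by omega))] at h5
        exact Nat.Coprime.coprime_dvd_right (dvd_pow_self a (by omega)) this
      exact Nat.Coprime.coprime_dvd_left (Nat.gcd_dvd_left _ _) h1
    rcases eq_or_lt_of_le hn with h1 | hn1
    · -- n = 1
      have : A = a - 1 := by rw [hA, ← h1, pow_one]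
      exact this ▸ Nat.gcd_dvd_left _ _
    · obtain ⟨u, -, hu⟩ := Nat.exists_mul_mod_eq_one_of_coprime hcop hn1
      have hlu : l * u = n * (l * u / n) + 1 := by
        conv_lhs => rw [← Nat.div_add_mod (l * u) n, hu]
      set v := l * u / n with hv
      have hgB' : g ∣ a ^ (l * u) - 1 := by
        refine dvd_trans (Nat.gcd_dvd_right A B) ?_
        rw [pow_mul]
        simpa using Nat.sub_dvd_pow_sub_pow (a ^ l) 1 u
      have hgA' : g ∣ a ^ (n * v) - 1 := by
        refine dvd_trans (Nat.gcd_dvd_left A B) ?_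
        rw [pow_mul]
        simpa using Nat.sub_dvd_pow_sub_pow (a ^ n) 1 v
      have hdiff : (a ^ (l * u) - 1) - (a ^ (n * v) - 1) = a ^ (n * v) * (a - 1) := by
        have h2 : a ^ (l * u) = a ^ (n * v) * a := by rw [hlu, pow_succ]
        have h3 : 1 ≤ a ^ (n * v) := Nat.one_le_pow _ _ (by omega)
        have h4 : a ^ (n * v) ≤ a ^ (n * v) * a := Nat.le_mul_of_pos_right _ (by omega)
        rw [h2, Nat.mul_sub, mul_one]
        omega
      have : g ∣ a ^ (n * v) * (a - 1) := hdiff ▸ Nat.dvd_sub hgB' hgA'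
      exact (Nat.Coprime.pow_right _ hga).dvd_of_dvd_mul_left this
  have hlcm : Nat.lcm A B ∣ x := Nat.lcm_dvd hAx hBx
  have hmain : A * B ∣ x * (a - 1) := by
    rw [← Nat.gcd_mul_lcm A B, mul_comm x (a - 1)]
    exact mul_dvd_mul hgcd hlcm
  constructor
  · rw [Nat.dvd_div_iff_mul_dvd hBx]
    have hd : 0 < a - 1 := by omega
    rw [← Nat.mul_dvd_mul_iff_right hd]
    calc B * (A / (a - 1)) * (a - 1) = A * B := by
          rw [mul_assoc, Nat.div_mul_cancel hd1]; ring
      _ ∣ x * (a - 1) := hmain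
  · exact hmain
end

section
/- Let p be a prime, n ≥ 2 an integer, and l an odd positive integer with gcd(l, n) = 1. Set d = gcd(n, p^l − 1). Then d·(p^l − 1) divides p^{ln} − 1, and gcd(p^n − 1, (p^{ln} − 1)/(d·(p^l − 1))) ≥ (p^n − 1)/(n·(p − 1)). -/
-- helper: m ∣ a^s - 1 iff (a : ZMod m)^s = 1 (one direction)
lemma pow_eq_one_of_dvd_sub {m a s : ℕ} (ha : 1 ≤ a) (h : m ∣ a ^ s - 1) :
    (a : ZMod m) ^ s = 1 := by
  have h1 : 1 ≤ a ^ s := Nat.one_le_pow _ _ ha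
  have : ((a ^ s - 1 : ℕ) : ZMod m) = 0 := (ZMod.natCast_eq_zero_iff _ _).mpr h
  have := this
  rw [Nat.cast_sub h1] at this
  push_cast at this
  linear_combination this

lemma gcd_pow_sub_one_le {p n l : ℕ} (hp : 2 ≤ p) (hn : 0 < n) (hl : 0 < l)
    (hcop : Nat.gcd l n = 1) : Nat.gcd (p ^ n - 1) (p ^ l - 1) ∣ p - 1 := by
  set m := Nat.gcd (p ^ n - 1) (p ^ l - 1) with hm
  have hp1 : 1 ≤ p := le_trans (by norm_num) hp
  have h1 : (p : ZMod m) ^ n = 1 := pow_eq_one_of_dvd_sub hp1 (Nat.gcd_dvd_left _ _)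
  have h2 : (p : ZMod m) ^ l = 1 := pow_eq_one_of_dvd_sub hp1 (Nat.gcd_dvd_right _ _)
  have ho : orderOf (p : ZMod m) ∣ Nat.gcd l n :=
    Nat.dvd_gcd (orderOf_dvd_of_pow_eq_one h2) (orderOf_dvd_of_pow_eq_one h1)
  rw [hcop, Nat.dvd_one] at ho
  have : (p : ZMod m) = 1 := orderOf_eq_one_iff.mp ho
  have : ((p - 1 : ℕ) : ZMod m) = 0 := by
    rw [Nat.cast_sub hp1, this]; ring
  exact (ZMod.natCast_eq_zero_iff _ _).mp this

lemma key_dvd {p n l : ℕ} (hp : 2 ≤ p) (hn : 0 < n) (hl : 0 < l) :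
    Nat.gcd n (p ^ l - 1) * (p ^ l - 1) ∣ p ^ (l * n) - 1 := by
  set q := p ^ l with hq
  have hq1 : 1 ≤ q := Nat.one_le_pow _ _ (by omega)
  set d := Nat.gcd n (q - 1) with hd
  -- work in ℤ
  have hgeom : ((q : ℤ) - 1) * (∑ i ∈ Finset.range n, (q : ℤ) ^ i) = (q : ℤ) ^ n - 1 := by
    rw [mul_comm]; exact geom_sum_mul _ _
  have hdS : (d : ℤ) ∣ ∑ i ∈ Finset.range n, (q : ℤ) ^ i := by
    have hq1' : (q : ZMod d) = 1 := by
      have : ((q - 1 : ℕ) : ZMod d) = 0 :=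
        (ZMod.natCast_eq_zero_iff _ _).mpr (Nat.gcd_dvd_right _ _)
      rw [Nat.cast_sub hq1] at this
      push_cast at this
      linear_combination this
    have : ((∑ i ∈ Finset.range n, (q : ℤ) ^ i : ℤ) : ZMod d) = 0 := by
      push_cast
      rw [hq1']
      simp
      exact (ZMod.natCast_eq_zero_iff _ _).mpr (Nat.gcd_dvd_left _ _)
    exact (ZMod.intCast_zmod_eq_zero_iff_dvd _ _).mp this
  have hZ : (d : ℤ) * ((q : ℤ) - 1) ∣ (q : ℤ) ^ n - 1 := by
    obtain ⟨k, hk⟩ := hdS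
    exact ⟨k, by rw [← hgeom, hk]; ring⟩
  have hqn1 : 1 ≤ q ^ n := Nat.one_le_pow _ _ (by omega)
  have hN : (d * (q - 1) : ℕ) ∣ q ^ n - 1 := by
    have := hZ
    rw [← Int.natCast_dvd_natCast]
    push_cast [Nat.cast_sub hq1, Nat.cast_sub hqn1]
    convert hZ using 2 <;> push_cast <;> ring
  rw [hq, ← pow_mul] at hN
  exact hN


/-- Let `p` be prime, `n ≥ 2`, `l` odd with `gcd(l, n) = 1`, and
`d = gcd(n, p^l - 1)`.  Then `d (p^l - 1)` divides `p^{ln} - 1` and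
`gcd(p^n - 1, (p^{ln} - 1)/(d (p^l - 1))) ≥ (p^n - 1)/(n (p - 1))`. -/
theorem gcd_torus_order_lower_bound (p n l : ℕ) (hp : p.Prime) (hn : 2 ≤ n)
    (hl : Odd l) (hcop : Nat.gcd l n = 1) :
    Nat.gcd n (p ^ l - 1) * (p ^ l - 1) ∣ p ^ (l * n) - 1 ∧
      ((Nat.gcd (p ^ n - 1)
          ((p ^ (l * n) - 1) / (Nat.gcd n (p ^ l - 1) * (p ^ l - 1)))) : ℝ) ≥
        ((p ^ n - 1 : ℕ) : ℝ) / ((n : ℝ) * ((p : ℝ) - 1)) := by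
  have hp2 : 2 ≤ p := hp.two_le
  have hl0 : 0 < l := hl.pos
  have hn0 : 0 < n := by omega
  have hdvd := key_dvd (p := p) (n := n) (l := l) hp2 hn0 hl0
  refine ⟨hdvd, ?_⟩
  set a := p ^ n - 1 with ha
  set b := Nat.gcd n (p ^ l - 1) * (p ^ l - 1) with hb
  set M := (p ^ (l * n) - 1) / b with hM
  have hql : 2 ≤ p ^ l := le_trans hp2 (Nat.le_self_pow (by omega) p)
  have hqn : 2 ≤ p ^ n := le_trans hp2 (Nat.le_self_pow (by omega) p)
  have hA : 0 < a := by omega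
  have hb0 : 0 < b := Nat.mul_pos (Nat.gcd_pos_of_pos_left _ hn0) (by omega)
  have heq : p ^ (l * n) - 1 = M * b := (Nat.div_mul_cancel hdvd).symm
  have ha_dvd : a ∣ p ^ (l * n) - 1 := by
    have := Nat.sub_dvd_pow_sub_pow (p ^ n) 1 l
    rwa [one_pow, ← pow_mul, mul_comm n l] at this
  set G := Nat.gcd a b with hG
  have hGa : G ∣ a := Nat.gcd_dvd_left _ _
  have hGb : G ∣ b := Nat.gcd_dvd_right _ _
  have hG0 : 0 < G := Nat.gcd_pos_of_pos_left _ hA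
  -- a / G divides M
  obtain ⟨k, hk⟩ : a ∣ M * b := heq ▸ ha_dvd
  have hdivM : a / G ∣ M := by
    refine (Nat.coprime_div_gcd_div_gcd hG0).dvd_of_dvd_mul_right ⟨k, ?_⟩
    apply Nat.eq_of_mul_eq_mul_right hG0
    calc M * (b / G) * G = M * b := by rw [mul_assoc, Nat.div_mul_cancel hGb]
      _ = a * k := hk
      _ = a / G * G * k := by rw [Nat.div_mul_cancel hGa]
      _ = a / G * k * G := by ring
  have hdvd_gcd : a / G ∣ Nat.gcd a M :=
    Nat.dvd_gcd ⟨G, (Nat.div_mul_cancel hGa).symm⟩ hdivM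
  have hgcd_pos : 0 < Nat.gcd a M := Nat.gcd_pos_of_pos_left _ hA
  have hle1 : a / G ≤ Nat.gcd a M := Nat.le_of_dvd hgcd_pos hdvd_gcd
  -- bound G ≤ n * (p - 1)
  have hGle : G ≤ n * (p - 1) := by
    have h2 : G ∣ Nat.gcd a (Nat.gcd n (p ^ l - 1)) * Nat.gcd a (p ^ l - 1) :=
      gcd_mul_dvd_mul_gcd a _ _
    have h3 : Nat.gcd a (Nat.gcd n (p ^ l - 1)) ≤ n :=
      Nat.le_of_dvd hn0 ((Nat.gcd_dvd_right a _).trans (Nat.gcd_dvd_left _ _))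
    have h4 : Nat.gcd a (p ^ l - 1) ≤ p - 1 :=
      Nat.le_of_dvd (by omega) (gcd_pow_sub_one_le hp2 hn0 hl0 hcop)
    calc G ≤ Nat.gcd a (Nat.gcd n (p ^ l - 1)) * Nat.gcd a (p ^ l - 1) :=
          Nat.le_of_dvd (Nat.mul_pos (Nat.gcd_pos_of_pos_left _ hA)
            (Nat.gcd_pos_of_pos_left _ hA)) h2
      _ ≤ n * (p - 1) := Nat.mul_le_mul h3 h4
  -- pass to ℝ
  have hcast : ((a / G : ℕ) : ℝ) = (a : ℝ) / (G : ℝ) := by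
    rw [Nat.cast_div hGa (by positivity)]
  have hGleR : (G : ℝ) ≤ (n : ℝ) * ((p : ℝ) - 1) := by
    have := hGle
    have h5 : ((n * (p - 1) : ℕ) : ℝ) = (n : ℝ) * ((p : ℝ) - 1) := by
      push_cast [Nat.cast_sub (by omega : 1 ≤ p)]; ring
    calc (G : ℝ) ≤ ((n * (p - 1) : ℕ) : ℝ) := Nat.cast_le.mpr hGle
      _ = _ := h5
  have hstep : (a : ℝ) / ((n : ℝ) * ((p : ℝ) - 1)) ≤ (a : ℝ) / (G : ℝ) := by
    apply div_le_div_of_nonneg_left (by positivity) (by positivity) hGleR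
  calc ((a : ℕ) : ℝ) / ((n : ℝ) * ((p : ℝ) - 1)) ≤ (a : ℝ) / (G : ℝ) := hstep
    _ = ((a / G : ℕ) : ℝ) := hcast.symm
    _ ≤ ((Nat.gcd a M : ℕ) : ℝ) := Nat.cast_le.mpr hle1
end

section
/- Let q ≥ 2 and M ≥ 1 be integers and let n ≥ 4. Then the sum over all pairs of integers 0 ≤ l < k ≤ n − 1 of gcd((q^n − 1)/(q − 1), M·(q^{k−l} − 1)) is at most n²·M·q^{⌊n/2⌋}; in particular it is at most n²·M·q^{n/2}. -/
/-- gcd(q^n - 1, q^d - 1) divides q^{gcd n d} - 1. -/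
lemma gcd_pow_sub_one_dvd (q n d : ℕ) (hq : 2 ≤ q) :
    Nat.gcd (q ^ n - 1) (q ^ d - 1) ∣ q ^ Nat.gcd n d - 1 := by
  set G := Nat.gcd (q ^ n - 1) (q ^ d - 1) with hG
  rcases Nat.eq_zero_or_pos G with h0 | hpos
  · have h := Nat.gcd_eq_zero_iff.mp h0
    have hn0 : n = 0 := by
      by_contra hne
      have : q ≤ q ^ n := Nat.le_self_pow hne q
      omega
    have hd0 : d = 0 := by
      by_contra hne
      have : q ≤ q ^ d := Nat.le_self_pow hne q
      omega
    simp [hn0, hd0]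
  haveI : NeZero G := ⟨hpos.ne'⟩
  have hcast : ∀ m : ℕ, G ∣ q ^ m - 1 → ((q : ZMod G)) ^ m = 1 := by
    intro m hm
    have h1 : 1 ≤ q ^ m := Nat.one_le_pow _ _ (by omega)
    have := (ZMod.natCast_eq_zero_iff _ _).2 hm
    push_cast [Nat.cast_sub h1] at this
    linear_combination this
  have hn1 : ((q : ZMod G)) ^ n = 1 := hcast n (Nat.gcd_dvd_left _ _)
  have hd1 : ((q : ZMod G)) ^ d = 1 := hcast d (Nat.gcd_dvd_right _ _)
  have hg : ((q : ZMod G)) ^ Nat.gcd n d = 1 := pow_gcd_eq_one.2 ⟨hn1, hd1⟩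
  have h1 : 1 ≤ q ^ Nat.gcd n d := Nat.one_le_pow _ _ (by omega)
  rw [← ZMod.natCast_eq_zero_iff]
  push_cast [Nat.cast_sub h1]
  linear_combination hg

/-- For integers `q ≥ 2`, `M ≥ 1`, `n ≥ 4`, the sum over pairs
`0 ≤ l < k ≤ n - 1` of `gcd((q^n - 1)/(q - 1), M (q^{k-l} - 1))` is at most
`n² M q^{⌊n/2⌋}`; in particular it is at most `n² M q^{n/2}`. -/
theorem sum_gcd_nonregular_bound (q M n : ℕ) (hq : 2 ≤ q) (hM : 1 ≤ M) (hn : 4 ≤ n) :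
    (∑ k ∈ Finset.range n, ∑ l ∈ Finset.range k,
        Nat.gcd ((q ^ n - 1) / (q - 1)) (M * (q ^ (k - l) - 1))) ≤
      n ^ 2 * M * q ^ (n / 2) ∧
    ((∑ k ∈ Finset.range n, ∑ l ∈ Finset.range k,
        Nat.gcd ((q ^ n - 1) / (q - 1)) (M * (q ^ (k - l) - 1)) : ℕ) : ℝ) ≤
      (n : ℝ) ^ 2 * (M : ℝ) * (q : ℝ) ^ ((n : ℝ) / 2) := by
  set A := (q ^ n - 1) / (q - 1) with hA
  have hdvdA : A ∣ q ^ n - 1 := by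
    have h1 : q - 1 ∣ q ^ n - 1 := by
      simpa using Nat.sub_dvd_pow_sub_pow q 1 n
    exact ⟨q - 1, (Nat.div_mul_cancel h1).symm⟩
  have hApos : 0 < A := by
    have h1 : q - 1 ∣ q ^ n - 1 := by simpa using Nat.sub_dvd_pow_sub_pow q 1 n
    have h2 : 0 < q ^ n - 1 := by
      have : 2 ≤ q ^ n := le_trans hq (Nat.le_self_pow (by omega) q)
      omega
    exact Nat.div_pos (Nat.le_of_dvd h2 h1) (by omega)
  -- key pointwise bound
  have key : ∀ k ∈ Finset.range n, ∀ l ∈ Finset.range k,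
      Nat.gcd A (M * (q ^ (k - l) - 1)) ≤ M * q ^ (n / 2) := by
    intro k hk l hl
    simp only [Finset.mem_range] at hk hl
    set d := k - l with hd
    have hd1 : 1 ≤ d := by omega
    have hdn : d < n := by omega
    have step1 : Nat.gcd A (M * (q ^ d - 1)) ∣ M * Nat.gcd A (q ^ d - 1) := by
      rw [← Nat.gcd_mul_left]
      exact Nat.dvd_gcd ((Nat.gcd_dvd_left _ _).trans (dvd_mul_left _ _))
        (Nat.gcd_dvd_right _ _)
    have step2 : Nat.gcd A (q ^ d - 1) ∣ q ^ Nat.gcd n d - 1 :=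
      (Nat.dvd_gcd ((Nat.gcd_dvd_left _ _).trans hdvdA) (Nat.gcd_dvd_right _ _)).trans
        (gcd_pow_sub_one_dvd q n d hq)
    have hg : Nat.gcd n d ≤ n / 2 := by
      have hgd : Nat.gcd n d ∣ n := Nat.gcd_dvd_left _ _
      have hlt : Nat.gcd n d < n := lt_of_le_of_lt (Nat.gcd_le_right _ hd1) hdn
      rcases hgd with ⟨c, hc⟩
      have hc2 : 2 ≤ c := by
        rcases Nat.lt_or_ge c 2 with h | h
        · interval_cases c <;> omega
        · exact h
      have : Nat.gcd n d * 2 ≤ n := by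
        calc Nat.gcd n d * 2 ≤ Nat.gcd n d * c := Nat.mul_le_mul_left _ hc2
        _ = n := hc.symm
      omega
    have step3 : q ^ Nat.gcd n d - 1 ≤ q ^ (n / 2) :=
      le_trans (Nat.sub_le _ _) (Nat.pow_le_pow_right (by omega) hg)
    calc Nat.gcd A (M * (q ^ d - 1))
        ≤ M * Nat.gcd A (q ^ d - 1) := Nat.le_of_dvd
          (Nat.mul_pos hM (Nat.gcd_pos_of_pos_left _ hApos)) step1
      _ ≤ M * (q ^ Nat.gcd n d - 1) := Nat.mul_le_mul_left _ (Nat.le_of_dvd (by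
            have : 2 ≤ q ^ Nat.gcd n d := by
              have : 1 ≤ Nat.gcd n d := Nat.gcd_pos_of_pos_right _ hd1
              calc 2 = 2 ^ 1 := rfl
              _ ≤ q ^ 1 := Nat.pow_le_pow_left hq 1
              _ ≤ q ^ Nat.gcd n d := Nat.pow_le_pow_right (by omega) this
            omega) step2)
      _ ≤ M * q ^ (n / 2) := Nat.mul_le_mul_left _ step3
  have hnat : (∑ k ∈ Finset.range n, ∑ l ∈ Finset.range k,
      Nat.gcd A (M * (q ^ (k - l) - 1))) ≤ n ^ 2 * M * q ^ (n / 2) := by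
    calc (∑ k ∈ Finset.range n, ∑ l ∈ Finset.range k, Nat.gcd A (M * (q ^ (k - l) - 1)))
        ≤ ∑ k ∈ Finset.range n, ∑ _l ∈ Finset.range k, M * q ^ (n / 2) := by
          apply Finset.sum_le_sum
          intro k hk
          exact Finset.sum_le_sum (key k hk)
      _ = ∑ k ∈ Finset.range n, k * (M * q ^ (n / 2)) := by
          simp [Finset.sum_const, smul_eq_mul]
      _ ≤ ∑ _k ∈ Finset.range n, n * (M * q ^ (n / 2)) := by
          apply Finset.sum_le_sum
          intro k hk
          exact Nat.mul_le_mul_right _ (le_of_lt (Finset.mem_range.mp hk))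
      _ = n * (n * (M * q ^ (n / 2))) := by simp [Finset.sum_const, smul_eq_mul]
      _ = n ^ 2 * M * q ^ (n / 2) := by ring
  refine ⟨hnat, ?_⟩
  have hreal : ((q : ℝ)) ^ (n / 2 : ℕ) ≤ (q : ℝ) ^ ((n : ℝ) / 2) := by
    rw [← Real.rpow_natCast (q : ℝ) (n / 2)]
    apply Real.rpow_le_rpow_of_exponent_le (by exact_mod_cast (by omega : 1 ≤ q))
    have : (n / 2 : ℕ) * 2 ≤ n := Nat.div_mul_le_self n 2
    have h' : ((n / 2 : ℕ) : ℝ) * 2 ≤ (n : ℝ) := by exact_mod_cast this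
    linarith
  calc ((∑ k ∈ Finset.range n, ∑ l ∈ Finset.range k,
        Nat.gcd A (M * (q ^ (k - l) - 1)) : ℕ) : ℝ)
      ≤ ((n ^ 2 * M * q ^ (n / 2) : ℕ) : ℝ) := by exact_mod_cast hnat
    _ = (n : ℝ) ^ 2 * (M : ℝ) * ((q : ℝ)) ^ (n / 2 : ℕ) := by push_cast; ring
    _ ≤ (n : ℝ) ^ 2 * (M : ℝ) * (q : ℝ) ^ ((n : ℝ) / 2) := by
        apply mul_le_mul_of_nonneg_left hreal
        positivity
end

section
/- Let M be a positive integer. There exists a positive constant N depending only on M such that the following holds: for every prime power q and every integer n ≥ 2 with |SL_n(F_q)| ≥ N, if F is a finite field with q^n elements, then the set S = { λ^M : λ ∈ F^×, λ^{(q^n−1)/(q−1)} = 1, and λ^{M·q^k} ≠ λ^{M·q^l} for all 0 ≤ l < k ≤ n−1 } has cardinality at least (q^n − 1)/(2·M·(q − 1)). (The elements of S are exactly the regular semisimple values of the power word x^M on a maximal torus of SL_n(q) corresponding to the partition n of n.) -/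
lemma aux_cube_le_two_pow {k : ℕ} (hk : 10 ≤ k) : k ^ 3 ≤ 2 ^ k := by
  induction k with
  | zero => omega
  | succ m ih =>
    rcases Nat.lt_or_ge m 10 with h | h
    · interval_cases m <;> simp_all
    · have h1 := ih h
      have h2 : (m + 1) ^ 3 ≤ 2 * m ^ 3 := by nlinarith [h, sq_nonneg m]
      calc (m + 1) ^ 3 ≤ 2 * m ^ 3 := h2
        _ ≤ 2 * 2 ^ m := by omega
        _ = 2 ^ (m + 1) := by ring

open Finset

lemma aux_gcd_pow_sub_one_dvd (q d n : ℕ) (hq : 2 ≤ q) :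
    Nat.gcd (q ^ d - 1) (q ^ n - 1) ∣ q ^ Nat.gcd d n - 1 := by
  set c := Nat.gcd (q ^ d - 1) (q ^ n - 1) with hc
  have key : ∀ m : ℕ, c ∣ q ^ m - 1 → (q : ZMod c) ^ m = 1 := by
    intro m hm
    have h1 : 1 ≤ q ^ m := Nat.one_le_pow _ _ (by omega)
    have : ((q ^ m - 1 : ℕ) : ZMod c) = 0 := (ZMod.natCast_eq_zero_iff _ _).2 hm
    have h2 : ((q : ZMod c)) ^ m - 1 = 0 := by push_cast [Nat.cast_sub h1] at this; simpa using this
    linear_combination h2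
  have hd : orderOf (q : ZMod c) ∣ d := orderOf_dvd_of_pow_eq_one (key d (Nat.gcd_dvd_left _ _))
  have hn : orderOf (q : ZMod c) ∣ n := orderOf_dvd_of_pow_eq_one (key n (Nat.gcd_dvd_right _ _))
  have hg : (q : ZMod c) ^ Nat.gcd d n = 1 :=
    orderOf_dvd_iff_pow_eq_one.1 (Nat.dvd_gcd hd hn)
  have h1 : 1 ≤ q ^ Nat.gcd d n := Nat.one_le_pow _ _ (by omega)
  have : ((q ^ Nat.gcd d n - 1 : ℕ) : ZMod c) = 0 := by
    push_cast [Nat.cast_sub h1]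
    simpa using sub_eq_zero.2 hg
  exact (ZMod.natCast_eq_zero_iff _ _).1 this

section Count
variable (F : Type) [Field F] [Fintype F]

lemma aux_count (M q n : ℕ) (hM : 0 < M) (hq : 2 ≤ q) (hn : 2 ≤ n)
    (hF : Fintype.card F = q ^ n)
    (hkey : 2 * M * n ^ 2 ≤ q ^ ((n - 1) / 2) ∨ (n = 2 ∧ 4 * M ≤ q)) :
    (q ^ n - 1) / (q - 1) ≤ 2 * M * Nat.card {y : Fˣ | ∃ lam : Fˣ,
        lam ^ ((q ^ n - 1) / (q - 1)) = 1 ∧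
        (∀ k l : ℕ, l < k → k ≤ n - 1 →
          lam ^ (M * q ^ k) ≠ lam ^ (M * q ^ l)) ∧
        y = lam ^ M} := by
  classical
  set P : ℕ := (q ^ n - 1) / (q - 1) with hPdef
  have hqn1 : 1 ≤ q ^ n := Nat.one_le_pow _ _ (by omega)
  have hqn2 : 2 ≤ q ^ n := le_trans hq (Nat.le_self_pow (by omega) q)
  have hdvd : (q - 1) ∣ (q ^ n - 1) := by
    simpa using Nat.sub_dvd_pow_sub_pow q 1 n
  have hPmul : P * (q - 1) = q ^ n - 1 := Nat.div_mul_cancel hdvd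
  have hPge : q ^ (n - 1) ≤ P := by
    have h1 : q ^ (n - 1) * (q - 1) ≤ q ^ n - 1 := by
      have hqq : q ^ (n - 1) * q = q ^ n := by
        rw [← pow_succ]; congr 1; omega
      have h2 : 1 ≤ q ^ (n - 1) := Nat.one_le_pow _ _ (by omega)
      calc q ^ (n - 1) * (q - 1) = q ^ (n - 1) * q - q ^ (n - 1) := by
            rw [Nat.mul_sub]; omega
        _ ≤ q ^ n - 1 := by rw [hqq]; omega
    rw [← hPmul] at h1
    exact Nat.le_of_mul_le_mul_right h1 (by omega)
  have hPpos : 0 < P := lt_of_lt_of_le (Nat.pow_pos (by omega) : 0 < q ^ (n-1)) hPge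
  have hPdvd : P ∣ q ^ n - 1 := ⟨q - 1, hPmul.symm⟩
  have hcardU : Fintype.card Fˣ = q ^ n - 1 := by
    rw [Fintype.card_units, hF]
  have hcop : Nat.Coprime q (q ^ n - 1) := by
    have h1 : Nat.Coprime (q ^ n) (q ^ n - 1) := by
      have hs : q ^ n - 1 + 1 = q ^ n := by omega
      rw [← hs]; simpa using Nat.coprime_succ_self_left (n := q ^ n - 1)
    exact Nat.Coprime.coprime_dvd_left (dvd_pow_self q (by omega)) h1
  have hcopP : ∀ l : ℕ, Nat.Coprime (q ^ l) P := fun l =>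
    ((hcop.pow_left l).coprime_dvd_right hPdvd)
  -- the finsets
  set s : Finset Fˣ := univ.filter (fun x : Fˣ => x ^ P = 1) with hsdef
  set good : Finset Fˣ := univ.filter (fun x : Fˣ => x ^ P = 1 ∧
      ∀ k l : ℕ, l < k → k ≤ n - 1 → x ^ (M * q ^ k) ≠ x ^ (M * q ^ l)) with hgooddef
  set bad : ℕ × ℕ → Finset Fˣ := fun p => univ.filter (fun x : Fˣ => x ^ P = 1 ∧
      p.2 < p.1 ∧ x ^ (M * q ^ p.1) = x ^ (M * q ^ p.2)) with hbaddef
  set SS : Finset Fˣ := univ.filter (fun y : Fˣ => ∃ lam : Fˣ,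
      lam ^ P = 1 ∧
      (∀ k l : ℕ, l < k → k ≤ n - 1 → lam ^ (M * q ^ k) ≠ lam ^ (M * q ^ l)) ∧
      y = lam ^ M) with hSSdef
  -- Step A : P ≤ s.card
  have hA : P ≤ s.card := by
    obtain ⟨g, hg⟩ := IsCyclic.exists_generator (α := Fˣ)
    have horder : orderOf g = q ^ n - 1 := by
      rw [orderOf_eq_card_of_forall_mem_zpowers hg, Nat.card_eq_fintype_card, hcardU]
    have hmul : (q - 1) * P = q ^ n - 1 := by rw [mul_comm]; exact hPmul
    have := Finset.card_le_card_of_injOn (f := fun i : ℕ => g ^ ((q - 1) * i))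
      (s := Finset.range P) (t := s) ?_ ?_
    · simpa using this
    · intro i _
      simp only [hsdef, Finset.mem_coe, mem_filter, mem_univ, true_and]
      rw [← pow_mul]
      have : (q - 1) * i * P = (q ^ n - 1) * i := by
        rw [← hmul]; ring
      rw [this, pow_mul, ← horder, pow_orderOf_eq_one, one_pow]
    · intro i hi j hj hij
      simp only [coe_range, Set.mem_Iio] at hi hj
      have hlt : ∀ m : ℕ, m < P → (q - 1) * m < orderOf g := by
        intro m hm
        rw [horder, ← hmul]
        exact (Nat.mul_lt_mul_left (by omega : 0 < q - 1)).2 hm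
      have := pow_injOn_Iio_orderOf (x := g) (Set.mem_Iio.2 (hlt i hi)) (Set.mem_Iio.2 (hlt j hj)) hij
      exact Nat.eq_of_mul_eq_mul_left (by omega) this
  -- Step B : splitting
  have hB : s.card ≤ good.card + ∑ p ∈ Finset.range n ×ˢ Finset.range n, (bad p).card := by
    have hsub : s ⊆ good ∪ (Finset.range n ×ˢ Finset.range n).biUnion bad := by
      intro x hx
      simp only [hsdef, mem_filter, mem_univ, true_and] at hx
      by_cases hgx : ∀ k l : ℕ, l < k → k ≤ n - 1 → x ^ (M * q ^ k) ≠ x ^ (M * q ^ l)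
      · refine mem_union_left _ ?_
        simp only [hgooddef, mem_filter, mem_univ, true_and]
        exact ⟨hx, hgx⟩
      · push_neg at hgx
        obtain ⟨k, l, hlk, hkn, heq⟩ := hgx
        refine mem_union_right _ (Finset.mem_biUnion.2 ⟨(k, l), ?_, ?_⟩)
        · simp only [Finset.mem_product, Finset.mem_range]; omega
        · simp [hbaddef, hx, hlk, heq]
    calc s.card ≤ (good ∪ (Finset.range n ×ˢ Finset.range n).biUnion bad).card :=
          Finset.card_le_card hsub
      _ ≤ good.card + ((Finset.range n ×ˢ Finset.range n).biUnion bad).card :=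
          Finset.card_union_le _ _
      _ ≤ good.card + ∑ p ∈ Finset.range n ×ˢ Finset.range n, (bad p).card :=
          Nat.add_le_add_left (Finset.card_biUnion_le) _
  -- Step C : per-pair bound
  have hC : ∀ k l : ℕ, l < k → k ≤ n - 1 →
      (bad (k, l)).card ≤ M * Nat.gcd (q ^ (k - l) - 1) P := by
    intro k l hlk hkn
    set d : ℕ := k - l with hddef
    have hd1 : 1 ≤ q ^ d := Nat.one_le_pow _ _ (by omega)
    set G : ℕ := Nat.gcd (M * (q ^ l * (q ^ d - 1))) P with hGdef
    have hGpos : 0 < G := Nat.gcd_pos_of_pos_right _ hPpos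
    have hsub : bad (k, l) ⊆ univ.filter (fun x : Fˣ => x ^ G = 1) := by
      intro x hx
      simp only [hbaddef, mem_filter, mem_univ, true_and] at hx
      obtain ⟨hxP, -, hxe⟩ := hx
      have hle : M * q ^ l ≤ M * q ^ k := by
        exact Nat.mul_le_mul_left _ (Nat.pow_le_pow_right (by omega) (by omega))
      have hdiff : x ^ (M * q ^ k - M * q ^ l) = 1 := by
        have h1 : x ^ (M * q ^ l) * x ^ (M * q ^ k - M * q ^ l) = x ^ (M * q ^ l) * 1 := by
          rw [← pow_add, mul_one, Nat.add_sub_cancel' hle, hxe]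
        exact mul_left_cancel h1
      have hexp : M * q ^ k - M * q ^ l = M * (q ^ l * (q ^ d - 1)) := by
        have hqk : q ^ k = q ^ l * q ^ d := by rw [← pow_add]; congr 1; omega
        rw [hqk, Nat.mul_sub, Nat.mul_sub]
        ring_nf
      rw [hexp] at hdiff
      have hord : orderOf x ∣ G :=
        Nat.dvd_gcd (orderOf_dvd_of_pow_eq_one hdiff) (orderOf_dvd_of_pow_eq_one hxP)
      simp only [mem_filter, mem_univ, true_and]
      exact orderOf_dvd_iff_pow_eq_one.1 hord
    have hcount : (univ.filter (fun x : Fˣ => x ^ G = 1)).card ≤ G := by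
      simpa using IsCyclic.card_pow_eq_one_le (α := Fˣ) hGpos
    have hGle : G ≤ M * Nat.gcd (q ^ d - 1) P := by
      have h1 : G ∣ Nat.gcd P M * Nat.gcd P (q ^ l * (q ^ d - 1)) := by
        rw [hGdef, Nat.gcd_comm]
        exact gcd_mul_dvd_mul_gcd P M _
      have h2 : Nat.gcd P (q ^ l * (q ^ d - 1)) = Nat.gcd P (q ^ d - 1) :=
        Nat.Coprime.gcd_mul_left_cancel_right _ (hcopP l)
      rw [h2] at h1
      have h3 : Nat.gcd P M * Nat.gcd P (q ^ d - 1) ≤ M * Nat.gcd (q ^ d - 1) P := by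
        rw [Nat.gcd_comm (q ^ d - 1) P]
        exact Nat.mul_le_mul_right _ (Nat.le_of_dvd hM (Nat.gcd_dvd_right _ _))
      have hpos : 0 < Nat.gcd P M * Nat.gcd P (q ^ d - 1) :=
        Nat.mul_pos (Nat.gcd_pos_of_pos_left _ hPpos) (Nat.gcd_pos_of_pos_left _ hPpos)
      exact le_trans (Nat.le_of_dvd hpos h1) h3
    exact le_trans (le_trans (Finset.card_le_card hsub) hcount) hGle
  -- bad is empty unless l < k
  have hbad0 : ∀ p : ℕ × ℕ, ¬ p.2 < p.1 → (bad p).card = 0 := by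
    intro p hp
    rw [Finset.card_eq_zero, Finset.filter_eq_empty_iff]
    intro x _
    tauto
  -- Step D : 2 * sum ≤ P
  have hD : 2 * (∑ p ∈ Finset.range n ×ˢ Finset.range n, (bad p).card) ≤ P := by
    rcases hkey with hkey | ⟨hn2, hkey⟩
    · -- general case
      have hperpair : ∀ p ∈ Finset.range n ×ˢ Finset.range n, (bad p).card ≤ M * q ^ (n / 2) := by
        rintro ⟨k, l⟩ hp
        simp only [Finset.mem_product, Finset.mem_range] at hp
        rcases Nat.lt_or_ge l k with hlt | hge
        · have hk : k ≤ n - 1 := by omega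
          have h1 := hC k l hlt hk
          have hg1 : 0 < Nat.gcd (k - l) n := Nat.gcd_pos_of_pos_left _ (by omega)
          have hgcdle : Nat.gcd (k - l) n ≤ n / 2 := by
            have hdvdn : Nat.gcd (k - l) n ∣ n := Nat.gcd_dvd_right _ _
            have hne : Nat.gcd (k - l) n ≤ k - l :=
              Nat.le_of_dvd (by omega) (Nat.gcd_dvd_left _ _)
            obtain ⟨t, ht⟩ := hdvdn
            have ht2 : 2 ≤ t := by
              rcases Nat.lt_or_ge t 2 with h | h
              · interval_cases t <;> omega
              · exact h
            rw [Nat.le_div_iff_mul_le (by omega)]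
            calc Nat.gcd (k - l) n * 2 ≤ Nat.gcd (k - l) n * t := Nat.mul_le_mul_left _ ht2
              _ = n := ht.symm
          have hdgcd : Nat.gcd (q ^ (k - l) - 1) P ∣ q ^ Nat.gcd (k - l) n - 1 := by
            refine dvd_trans ?_ (aux_gcd_pow_sub_one_dvd q (k - l) n hq)
            exact Nat.gcd_dvd_gcd_of_dvd_right _ hPdvd
          have hq2 : 2 ≤ q ^ Nat.gcd (k - l) n := by
            calc 2 ≤ q := hq
              _ = q ^ 1 := (pow_one q).symm
              _ ≤ q ^ Nat.gcd (k - l) n := Nat.pow_le_pow_right (by omega) hg1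
          have hle2 : q ^ Nat.gcd (k - l) n ≤ q ^ (n / 2) :=
            Nat.pow_le_pow_right (by omega) hgcdle
          have hle1 : Nat.gcd (q ^ (k - l) - 1) P ≤ q ^ Nat.gcd (k - l) n - 1 :=
            Nat.le_of_dvd (by omega) hdgcd
          have h2 : Nat.gcd (q ^ (k - l) - 1) P ≤ q ^ (n / 2) := by omega
          calc (bad (k, l)).card ≤ M * Nat.gcd (q ^ (k - l) - 1) P := h1
            _ ≤ M * q ^ (n / 2) := Nat.mul_le_mul_left _ h2
        · rw [hbad0 (k, l) (by simp; omega)]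
          positivity
      set X : ℕ := (n * n) * (M * q ^ (n / 2)) with hXdef
      have hsum : ∑ p ∈ Finset.range n ×ˢ Finset.range n, (bad p).card ≤ X := by
        calc ∑ p ∈ Finset.range n ×ˢ Finset.range n, (bad p).card
            ≤ (Finset.range n ×ˢ Finset.range n).card • (M * q ^ (n / 2)) :=
              Finset.sum_le_card_nsmul _ _ _ hperpair
          _ = X := by simp [Finset.card_product, smul_eq_mul, hXdef]
      have hfin : 2 * X ≤ P := by
        have he : (n - 1) / 2 + n / 2 = n - 1 := by omega
        calc 2 * X = (2 * M * n ^ 2) * q ^ (n / 2) := by rw [hXdef]; ring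
          _ ≤ q ^ ((n - 1) / 2) * q ^ (n / 2) := Nat.mul_le_mul_right _ hkey
          _ = q ^ (n - 1) := by rw [← pow_add, he]
          _ ≤ P := hPge
      omega
    · -- n = 2 case
      subst hn2
      have hP2 : P = q + 1 := by
        have hfact : q ^ 2 - 1 = (q + 1) * (q - 1) := by
          have hsq : q ^ 2 - 1 ^ 2 = (q + 1) * (q - 1) := Nat.sq_sub_sq q 1
          simpa using hsq
        rw [hPdef, hfact, Nat.mul_div_cancel _ (by omega : 0 < q - 1)]
      have h00 : (bad 0).card = 0 := hbad0 0 (by simp)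
      have h01 : (bad (0, 1)).card = 0 := hbad0 (0, 1) (by simp)
      have h11 : (bad 1).card = 0 := hbad0 1 (by simp)
      have hsum : ∑ p ∈ Finset.range 2 ×ˢ Finset.range 2, (bad p).card = (bad (1, 0)).card := by
        rw [Finset.sum_product]
        simp [Finset.sum_range_succ, h00, h01, h11, show (bad (0, 0)).card = 0 from h00,
          show (bad (1, 1)).card = 0 from h11]
      have hgcd2 : Nat.gcd (q ^ (1 - 0) - 1) P ≤ 2 := by
        have h1 : Nat.gcd (q - 1) P ∣ 2 := by
          have ha : Nat.gcd (q - 1) P ∣ q - 1 := Nat.gcd_dvd_left _ _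
          have hb : Nat.gcd (q - 1) P ∣ q + 1 := hP2 ▸ Nat.gcd_dvd_right _ _
          have hc := Nat.dvd_sub hb ha
          have h2 : q + 1 - (q - 1) = 2 := by omega
          rwa [h2] at hc
        simpa using Nat.le_of_dvd (by norm_num) h1
      have hb1 : (bad (1, 0)).card ≤ 2 * M := by
        have hcc := hC 1 0 (by omega) (by omega)
        calc (bad (1, 0)).card ≤ M * Nat.gcd (q ^ (1 - 0) - 1) P := hcc
          _ ≤ M * 2 := Nat.mul_le_mul_left _ hgcd2
          _ = 2 * M := by ring
      rw [hsum, hP2]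
      omega
  -- Step E : good.card ≤ M * SS.card
  have hE : good.card ≤ M * SS.card := by
    have himg : good.image (fun x : Fˣ => x ^ M) ⊆ SS := by
      intro y hy
      obtain ⟨x, hx, hxy⟩ := Finset.mem_image.1 hy
      simp only [hgooddef, mem_filter, mem_univ, true_and] at hx
      simp only [hSSdef, mem_filter, mem_univ, true_and]
      exact ⟨x, hx.1, hx.2, hxy.symm⟩
    have hfib : ∀ a ∈ good.image (fun x : Fˣ => x ^ M),
        (good.filter (fun x => x ^ M = a)).card ≤ M := by
      intro a ha
      obtain ⟨x0, hx0, hx0a⟩ := Finset.mem_image.1 ha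
      have hmap : ∀ x ∈ good.filter (fun x => x ^ M = a),
          x * x0⁻¹ ∈ (univ.filter (fun z : Fˣ => z ^ M = 1)) := by
        intro x hx
        obtain ⟨-, hxa⟩ := Finset.mem_filter.1 hx
        simp only [mem_filter, mem_univ, true_and]
        rw [mul_pow, hxa, inv_pow, hx0a, mul_inv_cancel]
      have hinj : Set.InjOn (fun x : Fˣ => x * x0⁻¹) (good.filter (fun x => x ^ M = a)) := by
        intro x _ y _ h
        simpa using mul_right_cancel (h : x * x0⁻¹ = y * x0⁻¹)
      calc (good.filter (fun x => x ^ M = a)).card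
          ≤ (univ.filter (fun z : Fˣ => z ^ M = 1)).card :=
            Finset.card_le_card_of_injOn _ hmap hinj
        _ ≤ M := by simpa using IsCyclic.card_pow_eq_one_le (α := Fˣ) hM
    calc good.card ≤ M * (good.image (fun x : Fˣ => x ^ M)).card :=
          Finset.card_le_mul_card_image _ _ hfib
      _ ≤ M * SS.card := Nat.mul_le_mul_left _ (Finset.card_le_card himg)
  -- Step F : Nat.card = SS.card
  have hF2 : Nat.card {y : Fˣ | ∃ lam : Fˣ,
      lam ^ P = 1 ∧
      (∀ k l : ℕ, l < k → k ≤ n - 1 → lam ^ (M * q ^ k) ≠ lam ^ (M * q ^ l)) ∧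
      y = lam ^ M} = SS.card := by
    rw [Nat.card_coe_set_eq, Set.ncard_eq_toFinset_card']
    congr 1
    ext y
    simp only [Set.mem_toFinset, Set.mem_setOf_eq, hSSdef, mem_filter, mem_univ, true_and]
  rw [hF2]
  -- final arithmetic
  have h1 : P ≤ M * SS.card + ∑ p ∈ Finset.range n ×ˢ Finset.range n, (bad p).card := by
    omega
  have hgoal : 2 * M * SS.card = 2 * (M * SS.card) := by ring
  rw [hgoal]
  omega

end Count

/-- For every `M ≥ 1` there is `N = N(M) > 0` such that whenever `q` is a
prime power (the cardinality of a finite field `Fq`), `n ≥ 2`, `|SL_n(F_q)| ≥ N`, and `F` is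
a finite field with `q^n` elements, the set of regular semisimple values
`{λ^M : λ ∈ F^×, λ^{(q^n-1)/(q-1)} = 1, λ^{M q^k} ≠ λ^{M q^l} for all 0 ≤ l < k ≤ n-1}`
has cardinality at least `(q^n - 1)/(2 M (q - 1))`. -/
theorem regular_power_values_singer_torus (M : ℕ) (hM : 0 < M) :
    ∃ N : ℕ, 0 < N ∧
      ∀ (Fq : Type) [Field Fq] [Fintype Fq] (F : Type) [Field F] [Fintype F] (n : ℕ),
        2 ≤ n → Fintype.card F = Fintype.card Fq ^ n →
        Nat.card (Matrix.SpecialLinearGroup (Fin n) Fq) ≥ N →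
        (Nat.card {y : Fˣ | ∃ lam : Fˣ,
            lam ^ ((Fintype.card Fq ^ n - 1) / (Fintype.card Fq - 1)) = 1 ∧
            (∀ k l : ℕ, l < k → k ≤ n - 1 →
              lam ^ (M * Fintype.card Fq ^ k) ≠ lam ^ (M * Fintype.card Fq ^ l)) ∧
            y = lam ^ M} : ℝ) ≥
          ((Fintype.card Fq ^ n - 1 : ℕ) : ℝ) /
            ((2 * M * (Fintype.card Fq - 1) : ℕ) : ℝ) := by
  set n0 : ℕ := 36 * M + 40 with hn0def
  refine ⟨(2 * M * n0 ^ 2) ^ (n0 * n0), by positivity, ?_⟩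
  intro Fq _ _ F _ _ n hn hcard hSL
  set q : ℕ := Fintype.card Fq with hqdef
  have hq : 2 ≤ q := Fintype.one_lt_card
  -- upper bound on the cardinality of SL_n(Fq)
  have hup : Nat.card (Matrix.SpecialLinearGroup (Fin n) Fq) ≤ q ^ (n * n) := by
    have h1 : Nat.card (Matrix.SpecialLinearGroup (Fin n) Fq)
        ≤ Nat.card (Matrix (Fin n) (Fin n) Fq) :=
      Nat.card_le_card_of_injective _ Subtype.val_injective
    have h2 : Nat.card (Matrix (Fin n) (Fin n) Fq) = q ^ (n * n) := by
      rw [Nat.card_eq_fintype_card]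
      rw [show Fintype.card (Matrix (Fin n) (Fin n) Fq)
          = Fintype.card (Fin n → Fin n → Fq) from Fintype.card_congr (Matrix.of).symm]
      simp [Fintype.card_fun, pow_mul, hqdef]
    omega
  have hNq : (2 * M * n0 ^ 2) ^ (n0 * n0) ≤ q ^ (n * n) := le_trans hSL hup
  -- the key numeric hypothesis
  have hkey : 2 * M * n ^ 2 ≤ q ^ ((n - 1) / 2) ∨ (n = 2 ∧ 4 * M ≤ q) := by
    rcases Nat.lt_or_ge n n0 with hlt | hge
    · -- small n : q must be large
      have h2 : q ^ (n * n) ≤ q ^ (n0 * n0) :=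
        Nat.pow_le_pow_right (by omega) (Nat.mul_le_mul hlt.le hlt.le)
      have h3 : (2 * M * n0 ^ 2) ^ (n0 * n0) ≤ q ^ (n0 * n0) := le_trans hNq h2
      have hqge : 2 * M * n0 ^ 2 ≤ q := by
        by_contra hcon
        push_neg at hcon
        have := Nat.pow_lt_pow_left hcon (show n0 * n0 ≠ 0 by positivity)
        omega
      rcases eq_or_lt_of_le hn with h2eq | h3le
      · right
        refine ⟨h2eq.symm, ?_⟩
        have hsq : 2 ≤ n0 ^ 2 := by nlinarith [hn0def]
        calc 4 * M = 2 * M * 2 := by ring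
          _ ≤ 2 * M * n0 ^ 2 := Nat.mul_le_mul_left _ hsq
          _ ≤ q := hqge
      · left
        have he : 1 ≤ (n - 1) / 2 := by omega
        calc 2 * M * n ^ 2 ≤ 2 * M * n0 ^ 2 := by
              have : n ^ 2 ≤ n0 ^ 2 := Nat.pow_le_pow_left hlt.le 2
              exact Nat.mul_le_mul_left _ this
          _ ≤ q := hqge
          _ = q ^ 1 := (pow_one q).symm
          _ ≤ q ^ ((n - 1) / 2) := Nat.pow_le_pow_right (by omega) he
    · -- large n : exponential beats polynomial
      left
      set k : ℕ := (n - 1) / 2 with hkdef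
      have hkM : 18 * M + 19 ≤ k := by omega
      have h3k : n ≤ 3 * k := by omega
      have hcube : k ^ 3 ≤ 2 ^ k := aux_cube_le_two_pow (by omega)
      have hn2 : n ^ 2 ≤ 9 * k ^ 2 := by nlinarith [h3k]
      have h18 : 18 * M ≤ k := by omega
      calc 2 * M * n ^ 2 ≤ 2 * M * (9 * k ^ 2) := Nat.mul_le_mul_left _ hn2
        _ = 18 * M * k ^ 2 := by ring
        _ ≤ k * k ^ 2 := Nat.mul_le_mul_right _ h18
        _ = k ^ 3 := by ring
        _ ≤ 2 ^ k := hcube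
        _ ≤ q ^ k := Nat.pow_le_pow_left hq k
  have hmain := aux_count F M q n hM hq hn hcard hkey
  -- convert to the real inequality
  have hdvd : (q - 1) ∣ (q ^ n - 1) := by
    simpa using Nat.sub_dvd_pow_sub_pow q 1 n
  have hPmul : (q ^ n - 1) / (q - 1) * (q - 1) = q ^ n - 1 := Nat.div_mul_cancel hdvd
  set Scard : ℕ := Nat.card {y : Fˣ | ∃ lam : Fˣ,
      lam ^ ((q ^ n - 1) / (q - 1)) = 1 ∧
      (∀ k l : ℕ, l < k → k ≤ n - 1 →
        lam ^ (M * q ^ k) ≠ lam ^ (M * q ^ l)) ∧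
      y = lam ^ M} with hScdef
  have hnat : q ^ n - 1 ≤ Scard * (2 * M * (q - 1)) := by
    calc q ^ n - 1 = (q ^ n - 1) / (q - 1) * (q - 1) := hPmul.symm
      _ ≤ 2 * M * Scard * (q - 1) := Nat.mul_le_mul_right _ hmain
      _ = Scard * (2 * M * (q - 1)) := by ring
  have hden : (0 : ℝ) < ((2 * M * (q - 1) : ℕ) : ℝ) := by
    have h0 : 0 < 2 * M * (q - 1) := Nat.mul_pos (Nat.mul_pos (by omega) hM) (by omega)
    exact_mod_cast h0
  rw [ge_iff_le, div_le_iff₀ hden]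
  exact_mod_cast hnat
end

section
/- Let p be a prime, q a power of p, M ≥ 1, n ≥ 2, and let i be an integer with n/2 ≤ i ≤ n − 1. Let K be an algebraic closure of F_p. Then the number of pairs (λ, μ) ∈ K^× × K^× satisfying λ^{q^i − 1} = 1 and μ^{q^{n−i} − 1} = 1 for which there exist integers 0 ≤ k ≤ i − 1 and 0 ≤ l ≤ n − i − 1 with λ^{M·q^k} = μ^{M·q^l} is at most i·(n−i)·M·(q^{n−i} − 1). -/
/-- Let `p` be prime, `q = p^e`, `M ≥ 1`, `n ≥ 2`, `n/2 ≤ i ≤ n - 1`, and let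
`K` be an algebraic closure of `F_p`.  The number of pairs `(λ, μ) ∈ K^× × K^×` with
`λ^{q^i - 1} = 1`, `μ^{q^{n-i} - 1} = 1` for which `λ^{M q^k} = μ^{M q^l}` for some
`0 ≤ k ≤ i - 1`, `0 ≤ l ≤ n - i - 1`, is at most `i (n - i) M (q^{n-i} - 1)`. -/
theorem count_mixed_collisions (p e M n i : ℕ) [Fact p.Prime] (he : 1 ≤ e) (hM : 1 ≤ M)
    (hn : 2 ≤ n) (hi1 : n ≤ 2 * i) (hi2 : i ≤ n - 1) :
    Nat.card {x : (AlgebraicClosure (ZMod p))ˣ × (AlgebraicClosure (ZMod p))ˣ |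
        x.1 ^ ((p ^ e) ^ i - 1) = 1 ∧ x.2 ^ ((p ^ e) ^ (n - i) - 1) = 1 ∧
        ∃ k l : ℕ, k < i ∧ l < n - i ∧
          x.1 ^ (M * (p ^ e) ^ k) = x.2 ^ (M * (p ^ e) ^ l)} ≤
      i * (n - i) * M * ((p ^ e) ^ (n - i) - 1) := by
  classical
  set K := AlgebraicClosure (ZMod p)
  set q := p ^ e with hq
  have hp2 : 2 ≤ p := (Fact.out : p.Prime).two_le
  have hq2 : 2 ≤ q := by
    calc 2 ≤ p := hp2
    _ = p ^ 1 := (pow_one p).symm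
    _ ≤ p ^ e := Nat.pow_le_pow_right (by omega) he
  have hi0 : 1 ≤ i := by omega
  have hni : 1 ≤ n - i := by omega
  have hqni : 2 ≤ q ^ (n - i) := by
    calc 2 ≤ q := hq2
    _ = q ^ 1 := (pow_one q).symm
    _ ≤ q ^ (n - i) := Nat.pow_le_pow_right (by omega) hni
  haveI : NeZero (q ^ (n - i) - 1) := ⟨by omega⟩
  haveI : NeZero M := ⟨by omega⟩
  -- coprimality of q^k and q^i - 1
  have hcop : ∀ k : ℕ, Nat.Coprime (q ^ k) (q ^ i - 1) := by
    intro k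
    apply Nat.Coprime.pow_left
    have hqi : 1 ≤ q ^ i := Nat.one_le_pow _ _ (by omega)
    have h1 : Nat.Coprime (q ^ i) (q ^ i - 1) :=
      (Nat.coprime_self_sub_right (by omega)).mpr (Nat.coprime_one_right _)
    exact Nat.Coprime.coprime_dvd_left (dvd_pow_self q (by omega)) h1
  -- canonical solution
  set F : ℕ → ℕ → Kˣ → Kˣ := fun k l μ =>
    if h : ∃ lam : Kˣ, lam ^ (q ^ i - 1) = 1 ∧ lam ^ (M * q ^ k) = μ ^ (M * q ^ l) then
      h.choose else 1 with hF
  have hFspec : ∀ (k l : ℕ) (μ : Kˣ),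
      (∃ lam : Kˣ, lam ^ (q ^ i - 1) = 1 ∧ lam ^ (M * q ^ k) = μ ^ (M * q ^ l)) →
      (F k l μ) ^ (q ^ i - 1) = 1 ∧ (F k l μ) ^ (M * q ^ k) = μ ^ (M * q ^ l) := by
    intro k l μ h
    simp only [hF, dif_pos h]
    exact h.choose_spec
  set S := {x : Kˣ × Kˣ |
        x.1 ^ (q ^ i - 1) = 1 ∧ x.2 ^ (q ^ (n - i) - 1) = 1 ∧
        ∃ k l : ℕ, k < i ∧ l < n - i ∧
          x.1 ^ (M * q ^ k) = x.2 ^ (M * q ^ l)} with hS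
  have hmemS : ∀ x : S, (x : Kˣ × Kˣ).1 ^ (q ^ i - 1) = 1 ∧
      (x : Kˣ × Kˣ).2 ^ (q ^ (n - i) - 1) = 1 ∧
      ∃ k l : ℕ, k < i ∧ l < n - i ∧
        (x : Kˣ × Kˣ).1 ^ (M * q ^ k) = (x : Kˣ × Kˣ).2 ^ (M * q ^ l) := fun x => x.2
  -- witness functions
  let wk : S → ℕ := fun x => ((hmemS x).2.2).choose
  let wl : S → ℕ := fun x => ((hmemS x).2.2).choose_spec.choose
  have hwk : ∀ x : S, wk x < i := fun x =>
    ((hmemS x).2.2).choose_spec.choose_spec.1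
  have hwl : ∀ x : S, wl x < n - i := fun x =>
    ((hmemS x).2.2).choose_spec.choose_spec.2.1
  have hw : ∀ x : S, (x : Kˣ × Kˣ).1 ^ (M * q ^ wk x) = (x : Kˣ × Kˣ).2 ^ (M * q ^ wl x) :=
    fun x => ((hmemS x).2.2).choose_spec.choose_spec.2.2
  -- the ratio is an M-th root of unity
  have hratio : ∀ x : S,
      ((x : Kˣ × Kˣ).1 * (F (wk x) (wl x) (x : Kˣ × Kˣ).2)⁻¹) ^ M = 1 := by
    intro x
    obtain ⟨h1, h2, -⟩ := hmemS x
    obtain ⟨hF1, hF2⟩ := hFspec (wk x) (wl x) (x : Kˣ × Kˣ).2 ⟨(x : Kˣ × Kˣ).1, h1, hw x⟩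
    set r := (x : Kˣ × Kˣ).1 * (F (wk x) (wl x) (x : Kˣ × Kˣ).2)⁻¹ with hr
    have hr1 : r ^ (q ^ i - 1) = 1 := by
      rw [hr, mul_pow, inv_pow, h1, hF1, inv_one, mul_one]
    have hr2 : r ^ (M * q ^ wk x) = 1 := by
      rw [hr, mul_pow, inv_pow, hw x, hF2, mul_inv_cancel]
    have hgcd : r ^ Nat.gcd (M * q ^ wk x) (q ^ i - 1) = 1 := pow_gcd_eq_one.mpr ⟨hr2, hr1⟩
    have hdvd : Nat.gcd (M * q ^ wk x) (q ^ i - 1) ∣ M := by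
      rw [Nat.Coprime.gcd_mul_right_cancel M (hcop (wk x))]
      exact Nat.gcd_dvd_left M _
    obtain ⟨c, hc⟩ := hdvd
    rw [hc, pow_mul, hgcd, one_pow]
  -- the injection
  let Φ : S → Fin i × Fin (n - i) × rootsOfUnity (q ^ (n - i) - 1) K × rootsOfUnity M K :=
    fun x => (⟨wk x, hwk x⟩, ⟨wl x, hwl x⟩, ⟨(x : Kˣ × Kˣ).2, (hmemS x).2.1⟩,
      ⟨(x : Kˣ × Kˣ).1 * (F (wk x) (wl x) (x : Kˣ × Kˣ).2)⁻¹, hratio x⟩)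
  have hΦinj : Function.Injective Φ := by
    intro x y h
    simp only [Φ, Prod.mk.injEq, Fin.mk.injEq, Subtype.mk.injEq] at h
    obtain ⟨hk, hl, hμ, hr⟩ := h
    have hμ := congrArg Subtype.val hμ
    simp only at hμ
    have hr := congrArg Subtype.val hr
    simp only at hr
    rw [hk, hl, hμ] at hr
    have hlam : (x : Kˣ × Kˣ).1 = (y : Kˣ × Kˣ).1 := mul_right_cancel hr
    exact Subtype.ext (Prod.ext hlam hμ)
  have key := Nat.card_le_card_of_injective Φ hΦinj
  calc Nat.card S ≤ _ := key
    _ = i * ((n - i) * (Nat.card (rootsOfUnity (q ^ (n - i) - 1) K) *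
        Nat.card (rootsOfUnity M K))) := by
      rw [Nat.card_prod, Nat.card_prod, Nat.card_prod, Nat.card_eq_fintype_card (α := Fin i),
        Nat.card_eq_fintype_card (α := Fin (n - i)), Fintype.card_fin, Fintype.card_fin]
    _ ≤ i * ((n - i) * ((q ^ (n - i) - 1) * M)) := by
      gcongr
      · exact card_rootsOfUnity _ _
      · exact card_rootsOfUnity _ _
    _ = i * (n - i) * M * (q ^ (n - i) - 1) := by ring
end

section
/- Let p be a prime, l an odd positive integer, n ≥ 2 with gcd(l, n) = 1, and q = p^l. Let n = n_1 + n_2 + ⋯ + n_s be a partition of n with s ≥ 2 parts, and set M = p^n − 1. For 1 ≤ i ≤ s define d_i = lcm over all 1 ≤ j_1 < ⋯ < j_i ≤ s of gcd(q^{n_{j_1}} − 1, …, q^{n_{j_i}} − 1), and set d = gcd(n, q − 1) and d' = gcd(n/gcd(n_1, …, n_s), q − 1). Assume (as holds for the image in PSL_n(q) of the corresponding maximal torus of SL_n(q)) that d' divides d_{s−1} and that d·(q − 1) divides d'·d_s, and let T be the abelian group Z_{d_1} × ⋯ × Z_{d_{s−2}} × Z_{d_{s−1}/d'} × Z_{d'·d_s/(d·(q−1))}.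 Then the image of the M-th power map on T has cardinality at most |T|·n/(p − 1). -/
lemma aux_card_range_nsmul (k M : ℕ) (hk : k ≠ 0) :
    Nat.card (Set.range fun x : ZMod k => M • x) * Nat.gcd k M = k := by
  haveI : NeZero k := ⟨hk⟩
  have h1 : (Set.range fun x : ZMod k => M • x)
      = ↑(AddSubgroup.zmultiples ((M : ℕ) : ZMod k)) := by
    ext y
    simp only [Set.mem_range, SetLike.mem_coe, AddSubgroup.mem_zmultiples_iff]
    constructor
    · rintro ⟨x, rfl⟩
      refine ⟨(x.val : ℤ), ?_⟩
      rw [zsmul_eq_mul, Int.cast_natCast, ZMod.natCast_rightInverse x, nsmul_eq_mul, mul_comm]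
    · rintro ⟨z, rfl⟩
      refine ⟨(z : ZMod k), ?_⟩
      rw [zsmul_eq_mul, nsmul_eq_mul, mul_comm]
  rw [h1, SetLike.coe_sort_coe, Nat.card_zmultiples, ZMod.addOrderOf_coe M hk,
    Nat.div_mul_cancel (Nat.gcd_dvd_left k M)]

/-- Let `p` be prime, `l` odd, `n ≥ 2` with `gcd(l, n) = 1`, `q = p^l`, and
let `n = n_1 + ⋯ + n_s` (`s ≥ 2`) be a partition of `n`; set `M = p^n - 1`.  With
`d_i = lcm_{1 ≤ j_1 < ⋯ < j_i ≤ s} gcd(q^{n_{j_1}} - 1, …, q^{n_{j_i}} - 1)`,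
`d = gcd(n, q-1)`, `d' = gcd(n / gcd(n_1, …, n_s), q-1)`, assume `d' ∣ d_{s-1}` and
`d (q-1) ∣ d' d_s`, and let
`T = Z_{d_1} × ⋯ × Z_{d_{s-2}} × Z_{d_{s-1}/d'} × Z_{d' d_s/(d (q-1))}`.
Then the image of the `M`-th power map on `T` has cardinality at most `|T| n / (p - 1)`. -/
theorem power_image_torus_PSL_upper_bound (p l n s : ℕ) (hp : p.Prime) (hl : Odd l)
    (hn : 2 ≤ n) (hcop : Nat.gcd l n = 1) (hs : 2 ≤ s)
    (nn : Fin s → ℕ) (hnn : ∀ j, 1 ≤ nn j) (hsum : ∑ j, nn j = n) :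
    let q := p ^ l
    let M := p ^ n - 1
    let D : ℕ → ℕ := fun i =>
      Finset.lcm (Finset.powersetCard i (Finset.univ : Finset (Fin s)))
        (fun A => A.gcd fun j => q ^ nn j - 1)
    let d := Nat.gcd n (q - 1)
    let d' := Nat.gcd (n / Finset.univ.gcd nn) (q - 1)
    d' ∣ D (s - 1) → d * (q - 1) ∣ d' * D s →
    let e : Fin s → ℕ := fun i =>
      if (i : ℕ) < s - 2 then D ((i : ℕ) + 1)
      else if (i : ℕ) = s - 2 then D (s - 1) / d'
      else d' * D s / (d * (q - 1))
    (Nat.card (Set.range fun t : (∀ i : Fin s, ZMod (e i)) => M • t) : ℝ) ≤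
      (Nat.card (∀ i : Fin s, ZMod (e i)) : ℝ) * (n : ℝ) / ((p : ℝ) - 1) := by
  intro q M D d d' hd' hds e
  have hp2 : 2 ≤ p := hp.two_le
  have hl1 : l ≠ 0 := by rintro rfl; simp [Nat.odd_iff] at hl
  have hq2 : 2 ≤ q := Nat.one_lt_pow hl1 hp2
  have hq1 : 1 ≤ q - 1 := by omega
  -- positivity of D i for 1 ≤ i ≤ s
  have hDpos : ∀ i, 1 ≤ i → 0 < D i := by
    intro i h1
    rw [Nat.pos_iff_ne_zero]
    intro h0
    rw [Finset.lcm_eq_zero_iff] at h0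
    obtain ⟨A, hA, hA0⟩ := h0
    rw [Finset.mem_powersetCard] at hA
    have hAne : A.Nonempty := by
      rw [← Finset.card_pos, hA.2]; omega
    obtain ⟨a, ha⟩ := hAne
    have := Finset.gcd_eq_zero_iff.mp hA0 a ha
    have hqa : 2 ≤ q ^ nn a := le_trans hq2 (Nat.le_self_pow (by have := hnn a; omega) q)
    omega
  -- facts about g, d, d'
  set g := Finset.univ.gcd nn with hgdef
  obtain ⟨j0, hj0⟩ : ∃ j : Fin s, (j : ℕ) = 0 := ⟨⟨0, by omega⟩, rfl⟩
  have hgdvd : g ∣ nn j0 := Finset.gcd_dvd (Finset.mem_univ j0)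
  have hgpos : 0 < g := by
    rcases Nat.eq_zero_or_pos g with h | h
    · rw [h] at hgdvd; have := hnn j0; omega
    · exact h
  have hnnj0n : nn j0 ≤ n := by
    rw [← hsum]
    exact Finset.single_le_sum (fun i _ => Nat.zero_le _) (Finset.mem_univ j0)
  have hgn : g ≤ n := le_trans (Nat.le_of_dvd (hnn j0) hgdvd) hnnj0n
  have hng : 0 < n / g := Nat.div_pos hgn hgpos
  have hd'pos : 0 < d' := Nat.gcd_pos_of_pos_left _ hng
  have hdpos : 0 < d := Nat.gcd_pos_of_pos_left _ (by omega)
  have hd'n : d' ≤ n := le_trans (Nat.gcd_le_left _ hng) (Nat.div_le_self n g)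
  -- positivity of e
  have heval : ∀ i : Fin s, e i = if (i : ℕ) < s - 2 then D ((i : ℕ) + 1)
      else if (i : ℕ) = s - 2 then D (s - 1) / d' else d' * D s / (d * (q - 1)) :=
    fun i => rfl
  have he : ∀ i : Fin s, e i ≠ 0 := by
    intro i
    rw [heval i]
    split_ifs with h1 h2
    · exact (hDpos _ (by omega)).ne'
    · exact (Nat.div_pos (Nat.le_of_dvd (hDpos _ (by omega)) hd') hd'pos).ne'
    · refine (Nat.div_pos (Nat.le_of_dvd ?_ hds) (by positivity)).ne'
      exact Nat.mul_pos hd'pos (hDpos s (by omega))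
  -- the key numeric inequality: p - 1 ≤ n * gcd (e j0) M
  have hMpos : 0 < M := by
    have h2n : 2 ≤ p ^ n := le_trans hp2 (Nat.le_self_pow (by omega) p)
    have : M = p ^ n - 1 := rfl
    omega
  have hpD1 : (p - 1) ∣ D 1 := by
    have hmem : ({j0} : Finset (Fin s)) ∈ Finset.powersetCard 1 (Finset.univ : Finset (Fin s)) := by
      rw [Finset.mem_powersetCard]
      exact ⟨Finset.subset_univ _, Finset.card_singleton _⟩
    have h2 : (p - 1) ∣ q ^ nn j0 - 1 := by
      have : q ^ nn j0 = p ^ (l * nn j0) := by rw [pow_mul]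
      rw [this]
      simpa using Nat.sub_dvd_pow_sub_pow p 1 (l * nn j0)
    refine dvd_trans h2 ?_
    have hlcm := Finset.dvd_lcm (f := fun A : Finset (Fin s) => A.gcd fun j => q ^ nn j - 1) hmem
    simp only [Finset.gcd_singleton, id_eq] at hlcm
    exact (normalize_dvd_iff.mp hlcm : _)
  have hpM : (p - 1) ∣ M := by
    simpa using Nat.sub_dvd_pow_sub_pow p 1 n
  have hpG : (p - 1) ∣ Nat.gcd (D 1) M := Nat.dvd_gcd hpD1 hpM
  have hGpos : 0 < Nat.gcd (D 1) M := Nat.gcd_pos_of_pos_left _ (hDpos 1 le_rfl)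
  have key : p - 1 ≤ n * Nat.gcd (e j0) M := by
    by_cases hs3 : 3 ≤ s
    · have he0 : e j0 = D 1 := by
        rw [heval j0, hj0, if_pos (by omega)]
      rw [he0]
      calc p - 1 ≤ Nat.gcd (D 1) M := Nat.le_of_dvd hGpos hpG
        _ ≤ n * Nat.gcd (D 1) M := Nat.le_mul_of_pos_left _ (by omega)
    · have hs2 : s = 2 := by omega
      have he0 : e j0 = D 1 / d' := by
        rw [heval j0, hj0, if_neg (by omega), if_pos (by omega), hs2]
      have hd'D1 : d' ∣ D 1 := by
        have := hd'; rw [hs2] at this; exact this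
      have hchain : Nat.gcd (D 1) M ∣ d' * Nat.gcd (D 1 / d') M := by
        rw [← Nat.gcd_mul_left]
        exact Nat.dvd_gcd (by rw [Nat.mul_div_cancel' hd'D1]; exact Nat.gcd_dvd_left _ _)
          ((Nat.gcd_dvd_right _ _).mul_left d')
      have hgcdpos : 0 < Nat.gcd (D 1 / d') M := by
        refine Nat.gcd_pos_of_pos_left _ ?_
        exact Nat.div_pos (Nat.le_of_dvd (hDpos 1 le_rfl) hd'D1) hd'pos
      calc p - 1 ≤ Nat.gcd (D 1) M := Nat.le_of_dvd hGpos hpG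
        _ ≤ d' * Nat.gcd (D 1 / d') M := Nat.le_of_dvd (by positivity) hchain
        _ ≤ n * Nat.gcd (D 1 / d') M := Nat.mul_le_mul_right _ hd'n
        _ = n * Nat.gcd (e j0) M := by rw [he0]
  -- cardinalities
  have hrange : (Set.range fun t : (∀ i : Fin s, ZMod (e i)) => M • t)
      = Set.pi Set.univ (fun i => Set.range fun x : ZMod (e i) => M • x) := by
    have : (fun t : (∀ i : Fin s, ZMod (e i)) => M • t)
        = Pi.map (fun i (x : ZMod (e i)) => M • x) := rfl
    rw [this, Set.range_piMap]
  set c : Fin s → ℕ := fun i => Nat.card (Set.range fun x : ZMod (e i) => M • x) with hcdef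
  have hc : ∀ i, c i * Nat.gcd (e i) M = e i := fun i => aux_card_range_nsmul (e i) M (he i)
  have hcle : ∀ i, c i ≤ e i := by
    intro i
    have := hc i
    have hgpos : 0 < Nat.gcd (e i) M := Nat.gcd_pos_of_pos_left _ (Nat.pos_of_ne_zero (he i))
    nlinarith [Nat.pos_of_ne_zero (he i)]
  -- card of range
  have hcard1 : Nat.card (Set.range fun t : (∀ i : Fin s, ZMod (e i)) => M • t) = ∏ i, c i := by
    rw [hrange, Nat.card_congr (Equiv.Set.univPi _), Nat.card_pi]
  have hcard2 : Nat.card (∀ i : Fin s, ZMod (e i)) = ∏ i, e i := by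
    rw [Nat.card_pi]
    exact Finset.prod_congr rfl fun i _ => Nat.card_zmod _
  -- main nat inequality
  have hmain : (∏ i, c i) * (p - 1) ≤ n * ∏ i, e i := by
    rw [← Finset.mul_prod_erase Finset.univ c (Finset.mem_univ j0),
        ← Finset.mul_prod_erase Finset.univ e (Finset.mem_univ j0)]
    have h1 : c j0 * (p - 1) ≤ n * e j0 := by
      calc c j0 * (p - 1) ≤ c j0 * (n * Nat.gcd (e j0) M) := Nat.mul_le_mul_left _ key
        _ = n * (c j0 * Nat.gcd (e j0) M) := by ring
        _ = n * e j0 := by rw [hc j0]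
    have h2 : ∏ i ∈ Finset.univ.erase j0, c i ≤ ∏ i ∈ Finset.univ.erase j0, e i :=
      Finset.prod_le_prod' fun i _ => hcle i
    calc c j0 * (∏ i ∈ Finset.univ.erase j0, c i) * (p - 1)
        = (c j0 * (p - 1)) * (∏ i ∈ Finset.univ.erase j0, c i) := by ring
      _ ≤ (n * e j0) * (∏ i ∈ Finset.univ.erase j0, e i) := Nat.mul_le_mul h1 h2
      _ = n * (e j0 * ∏ i ∈ Finset.univ.erase j0, e i) := by ring
  -- conclude in ℝ
  rw [hcard1, hcard2]
  have hppos : (0 : ℝ) < (p : ℝ) - 1 := by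
    have : (2 : ℝ) ≤ (p : ℝ) := by exact_mod_cast hp2
    linarith
  rw [le_div_iff₀ hppos]
  have hcast : ((p : ℝ) - 1) = ((p - 1 : ℕ) : ℝ) := by
    rw [Nat.cast_sub (by omega)]; norm_num
  rw [hcast]
  calc ((∏ i, c i : ℕ) : ℝ) * ((p - 1 : ℕ) : ℝ) = (((∏ i, c i) * (p - 1) : ℕ) : ℝ) := by
        push_cast; ring
    _ ≤ ((n * ∏ i, e i : ℕ) : ℝ) := by exact_mod_cast hmain
    _ = ((∏ i, e i : ℕ) : ℝ) * (n : ℝ) := by push_cast; ring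
end
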